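/- Let A_1, A_2, … be a quasifibonacci sequence of level N, let k ≥ N+1, and let n satisfy A_{k,1} < n ≤ A_{k,2}. Then: (i) the map a ↦ a − τ_k is a bijection from T_n = {a ∈ S_n : l(a) = k} onto S_{n−A_k} preserving the edge relation in both directions; (ii) every a ∈ R_n = {a ∈ S_n : l(a) = k−1} satisfies a_{k−N} = a_{k−N+1} = ⋯ = a_{k−1} = 1, and the map a ↦ a − η_k is a bijection from R_n onto {b ∈ S_{n−A_k} : l(b) ≤ k−N−1} preserving the edge relation in both directions. -/

import Mathlib

/-- `A` (with meaningful values at indices `≥ 1`) is a quasifibonacci sequence of level `N`: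
the terms are positive, `A (k+N) = A (k+N-1) + ⋯ + A k` for all `k ≥ 1`, and
`A k > A (k-1) + ⋯ + A 1` for all `1 ≤ k ≤ N`. -/
def QuasiFib (N : ℕ) (A : ℕ → ℕ) : Prop :=
  (∀ i, 1 ≤ i → 0 < A i) ∧
  (∀ k, 1 ≤ k → A (k + N) = ∑ i ∈ Finset.Icc k (k + N - 1), A i) ∧
  (∀ k, 1 ≤ k → k ≤ N → (∑ i ∈ Finset.Icc 1 (k - 1), A i) < A k)

/-- `SRep A n` is the set of partitions of `n` into distinct terms of `A`, encoded as the
finite sets `F` of positive indices with `∑_{i ∈ F} A i = n` (i.e. the 0-1 indicator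
sequences of the paper). -/
def SRep (A : ℕ → ℕ) (n : ℕ) : Set (Finset ℕ) :=
  {F | (∀ i ∈ F, 1 ≤ i) ∧ (∑ i ∈ F, A i) = n}

/-- the length `l(a)`: the largest index `i` with `a_i = 1` (and `0` for the empty set). -/
def len (F : Finset ℕ) : ℕ := F.sup id

/-- The directed edge relation of the digraph `G_n`: `(a,b)` is an edge iff there is a `k ≥ 1`
with `a_{k+N} = 1`, `a_k = ⋯ = a_{k+N-1} = 0`, `b_{k+N} = 0`, `b_k = ⋯ = b_{k+N-1} = 1`, and
`a_t = b_t` for all `t ∉ {k, …, k+N}`. -/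
def Edge (N : ℕ) (F G : Finset ℕ) : Prop :=
  ∃ k, 1 ≤ k ∧ (k + N) ∈ F ∧ (∀ i ∈ Finset.Ico k (k + N), i ∉ F) ∧
    (k + N) ∉ G ∧ (∀ i ∈ Finset.Ico k (k + N), i ∈ G) ∧
    (∀ t, t ∉ Finset.Icc k (k + N) → (t ∈ F ↔ t ∈ G))

/-- The partial order of the poset `P_n`: `a ≥ b` iff `b` is reachable from `a` by a
(possibly empty) directed path of edges. -/
def pge (N : ℕ) : Finset ℕ → Finset ℕ → Prop := Relation.ReflTransGen (Edge N)

/-- `A_{k,0} = A_k + Σ_{1 ≤ i < k-N-1, N∤i} A_{k-N-1-i}`. -/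
def Ak0 (N : ℕ) (A : ℕ → ℕ) (k : ℕ) : ℕ :=
  A k + ∑ i ∈ (Finset.Ico 1 (k - N - 1)).filter (fun i => ¬ N ∣ i), A (k - N - 1 - i)

/-- `A_{k,1} = A_k + Σ_{1 ≤ i < k-N, N∤i} A_{k-N-i}`. -/
def Ak1 (N : ℕ) (A : ℕ → ℕ) (k : ℕ) : ℕ :=
  A k + ∑ i ∈ (Finset.Ico 1 (k - N)).filter (fun i => ¬ N ∣ i), A (k - N - i)

/-- `A_{k,2} = A_k + Σ_{1 ≤ i < k-N+1, N∤i} A_{k-N+1-i}`. -/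
def Ak2 (N : ℕ) (A : ℕ → ℕ) (k : ℕ) : ℕ :=
  A k + ∑ i ∈ (Finset.Ico 1 (k - N + 1)).filter (fun i => ¬ N ∣ i), A (k - N + 1 - i)


section AuxiliaryQF

lemma qf_pair_le {A : ℕ → ℕ} {a b : ℕ} {s : Finset ℕ} (hab : a ≠ b) (ha : a ∈ s)
    (hb : b ∈ s) : A a + A b ≤ ∑ i ∈ s, A i := by
  have hsub : ({a, b} : Finset ℕ) ⊆ s := by
    intro x hx; simp only [Finset.mem_insert, Finset.mem_singleton] at hx
    rcases hx with rfl | rfl <;> assumption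
  calc A a + A b = ∑ i ∈ ({a, b} : Finset ℕ), A i := by
        rw [Finset.sum_insert (by simp [hab]), Finset.sum_singleton]
    _ ≤ _ := Finset.sum_le_sum_of_subset hsub

lemma qf_succ {N : ℕ} {A : ℕ → ℕ} (hN : 2 ≤ N) (hA : QuasiFib N A) :
    ∀ i, 1 ≤ i → A i < A (i + 1) := by
  intro i hi
  rcases le_or_gt (i + 1) N with h | h
  · have h2 := hA.2.2 (i + 1) (by omega) h
    have : A i ≤ ∑ j ∈ Finset.Icc 1 (i + 1 - 1), A j := by
      apply Finset.single_le_sum (f := A) (fun j _ => Nat.zero_le _)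
      simp [Finset.mem_Icc]; omega
    omega
  · have hrec := hA.2.1 (i + 1 - N) (by omega)
    have he : i + 1 - N + N = i + 1 := by omega
    rw [he] at hrec
    have hge : A (i - 1) + A i ≤ ∑ j ∈ Finset.Icc (i + 1 - N) (i + 1 - 1), A j := by
      apply qf_pair_le (by omega) <;> (simp [Finset.mem_Icc]; omega)
    have hpos := hA.1 (i - 1) (by omega)
    omega

lemma qf_mono {N : ℕ} {A : ℕ → ℕ} (hN : 2 ≤ N) (hA : QuasiFib N A) :
    ∀ i j, 1 ≤ i → i ≤ j → A i ≤ A j := by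
  intro i j hi hij
  induction j, hij using Nat.le_induction with
  | base => exact le_rfl
  | succ m hm ih => exact le_trans ih (le_of_lt (qf_succ hN hA m (by omega)))

lemma qf_rec {N : ℕ} {A : ℕ → ℕ} (hN : 2 ≤ N) (hA : QuasiFib N A) {r : ℕ} (hr : N ≤ r) :
    ∑ i ∈ Finset.Icc 1 r, A i = A (r + 1) + ∑ i ∈ Finset.Icc 1 (r - N), A i := by
  have hrec := hA.2.1 (r - N + 1) (by omega)
  have he : r - N + 1 + N = r + 1 := by omega
  rw [he] at hrec
  have he2 : r + 1 - 1 = r := by omega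
  rw [he2] at hrec
  have hsplit : ∑ i ∈ Finset.Icc 1 (r - N), A i + ∑ i ∈ Finset.Icc (r - N + 1) r, A i
      = ∑ i ∈ Finset.Icc 1 r, A i := by
    rw [show Finset.Icc 1 (r - N) = Finset.Ioc 0 (r - N) by rw [← Finset.Icc_add_one_left_eq_Ioc, zero_add],
        show Finset.Icc (r - N + 1) r = Finset.Ioc (r - N) r by rw [← Finset.Icc_add_one_left_eq_Ioc],
        show Finset.Icc 1 r = Finset.Ioc 0 r by rw [← Finset.Icc_add_one_left_eq_Ioc, zero_add]]
    exact Finset.sum_Ioc_consecutive _ (by omega) (by omega)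
  omega

lemma qf_P_lt {N : ℕ} {A : ℕ → ℕ} (hN : 2 ≤ N) (hA : QuasiFib N A) :
    ∀ m, (∑ i ∈ Finset.Icc 1 m, A i) < A (m + 2) := by
  intro m
  induction m using Nat.strong_induction_on with
  | _ m ih =>
    rcases Nat.eq_zero_or_pos m with rfl | hm
    · simpa using hA.1 2 (by omega)
    rcases lt_or_ge m N with h | h
    · have h2 := hA.2.2 (m + 1) (by omega) (by omega)
      simp only [Nat.add_sub_cancel] at h2
      exact lt_of_lt_of_le h2 (qf_mono hN hA (m + 1) (m + 2) (by omega) (by omega))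
    · rw [qf_rec hN hA h]
      have ih2 := ih (m - N) (by omega)
      have hkey : A (m + 1) + A (m - N + 2) ≤ A (m + 2) := by
        have hrec := hA.2.1 (m + 2 - N) (by omega)
        have he : m + 2 - N + N = m + 2 := by omega
        rw [he] at hrec
        have he2 : m + 2 - 1 = m + 1 := by omega
        rw [he2] at hrec
        have := qf_pair_le (A := A) (a := m + 1) (b := m + 2 - N)
          (s := Finset.Icc (m + 2 - N) (m + 1)) (by omega)
          (by simp [Finset.mem_Icc]; omega) (by simp [Finset.mem_Icc]; omega)
        rw [show m + 2 - N = m - N + 2 by omega] at hrec this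
        omega
      omega

lemma qf_sum_A_sub_le {A : ℕ → ℕ} (c d : ℕ) (S : Finset ℕ)
    (hS : ∀ i ∈ S, i < c ∧ d + i ≥ c ∧ 1 ≤ c - i) :
    ∑ i ∈ S, A (c - i) ≤ ∑ j ∈ Finset.Icc 1 d, A j := by
  have hinj : ∀ x ∈ S, ∀ y ∈ S, c - x = c - y → x = y := by
    intro x hx y hy hxy
    have := hS x hx; have := hS y hy; omega
  have heq : ∑ j ∈ S.image (fun i => c - i), A j = ∑ i ∈ S, A (c - i) :=
    Finset.sum_image hinj
  rw [← heq]
  apply Finset.sum_le_sum_of_subset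
  intro j hj
  simp only [Finset.mem_image] at hj
  obtain ⟨i, hi, rfl⟩ := hj
  have := hS i hi
  simp only [Finset.mem_Icc]; omega

lemma qf_reindex {m : ℕ} (A : ℕ → ℕ) :
    ∑ i ∈ Finset.Ico 1 m, A (m - i) = ∑ j ∈ Finset.Icc 1 (m - 1), A j := by
  apply Finset.sum_nbij' (i := fun i => m - i) (j := fun j => m - j)
  · intro a ha; simp only [Finset.mem_Ico] at ha; simp only [Finset.mem_Icc]; omega
  · intro a ha; simp only [Finset.mem_Icc] at ha; simp only [Finset.mem_Ico]; omega
  · intro a ha; simp only [Finset.mem_Ico] at ha; omega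
  · intro a ha; simp only [Finset.mem_Icc] at ha; omega
  · intro a _; rfl

lemma qf_div_le {N : ℕ} {A : ℕ → ℕ} (hN : 2 ≤ N) (hA : QuasiFib N A) {m : ℕ}
    (hm : 1 ≤ m) :
    ∑ i ∈ (Finset.Ico 1 m).filter (fun i => N ∣ i), A (m - i) ≤ A m := by
  have hle : ∑ i ∈ (Finset.Ico 1 m).filter (fun i => N ∣ i), A (m - i)
      ≤ ∑ j ∈ Finset.Icc 1 (m - N), A j := by
    apply qf_sum_A_sub_le
    intro i hi
    simp only [Finset.mem_filter, Finset.mem_Ico] at hi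
    have : N ≤ i := Nat.le_of_dvd (by omega) hi.2
    omega
  rcases eq_or_lt_of_le hm with h1 | h2
  · have : (Finset.Ico 1 m).filter (fun i => N ∣ i) = ∅ := by
      rw [← h1]; simp
    rw [this]; simpa using Nat.le_of_lt (hA.1 m hm)
  · have hP := qf_P_lt hN hA (m - N)
    have hmono := qf_mono hN hA (m - N + 2) m (by omega) (by omega)
    omega

lemma qf_edge_erase {N k : ℕ} {a b : Finset ℕ} (ha : k ∈ a) (hb : k ∈ b) :
    Edge N a b ↔ Edge N (a.erase k) (b.erase k) := by
  constructor
  · rintro ⟨j, hj1, hja, hwa, hjb, hwb, hout⟩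
    have hk1 : k ≠ j + N := fun h => hjb (h ▸ hb)
    have hk2 : k ∉ Finset.Ico j (j + N) := fun h => hwa k h ha
    refine ⟨j, hj1, ?_, ?_, ?_, ?_, ?_⟩
    · exact Finset.mem_erase.2 ⟨fun h => hk1 h.symm, hja⟩
    · intro i hi hmem
      exact hwa i hi (Finset.mem_of_mem_erase hmem)
    · intro h; exact hjb (Finset.mem_of_mem_erase h)
    · intro i hi
      refine Finset.mem_erase.2 ⟨?_, hwb i hi⟩
      rintro rfl; exact hk2 hi
    · intro t ht
      by_cases htk : t = k
      · subst htk; simp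
      · simp only [Finset.mem_erase, htk, ne_eq, not_false_eq_true, true_and]
        exact hout t ht
  · rintro ⟨j, hj1, hja, hwa, hjb, hwb, hout⟩
    have hk1 : k ≠ j + N := by
      rintro rfl; exact (Finset.mem_erase.1 hja).1 rfl
    have hk2 : k ∉ Finset.Ico j (j + N) := by
      intro h
      exact (Finset.mem_erase.1 (hwb k h)).1 rfl
    refine ⟨j, hj1, Finset.mem_of_mem_erase hja, ?_, ?_, ?_, ?_⟩
    · intro i hi hmem
      refine hwa i hi (Finset.mem_erase.2 ⟨?_, hmem⟩)
      rintro rfl; exact hk2 hi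
    · intro h
      refine hjb (Finset.mem_erase.2 ⟨?_, h⟩)
      rintro rfl; exact hk1 rfl
    · intro i hi; exact Finset.mem_of_mem_erase (hwb i hi)
    · intro t ht
      by_cases htk : t = k
      · subst htk; simp [ha, hb]
      · have := hout t ht
        simp only [Finset.mem_erase, htk, ne_eq, not_false_eq_true, true_and] at this
        exact this

lemma qf_edge_sdiff {N k : ℕ} (hN : 2 ≤ N) (hk : N + 1 ≤ k) {a b : Finset ℕ}
    (ha : Finset.Icc (k - N) (k - 1) ⊆ a) (hb : Finset.Icc (k - N) (k - 1) ⊆ b)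
    (hla : ∀ i ∈ a, i ≤ k - 1) :
    Edge N a b ↔
      Edge N (a \ Finset.Icc (k - N) (k - 1)) (b \ Finset.Icc (k - N) (k - 1)) := by
  set I := Finset.Icc (k - N) (k - 1) with hI
  constructor
  · rintro ⟨j, hj1, hja, hwa, hjb, hwb, hout⟩
    have hjle : j + N ≤ k - 1 := hla _ hja
    have hjI : j + N ∉ I := fun h => hjb (hb h)
    have hjsmall : j + N < k - N := by
      simp only [hI, Finset.mem_Icc] at hjI; omega
    refine ⟨j, hj1, ?_, ?_, ?_, ?_, ?_⟩
    · refine Finset.mem_sdiff.2 ⟨hja, ?_⟩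
      simp only [hI, Finset.mem_Icc]; omega
    · intro i hi hmem
      exact hwa i hi (Finset.mem_sdiff.1 hmem).1
    · intro h; exact hjb (Finset.mem_sdiff.1 h).1
    · intro i hi
      have hilt : i < j + N := (Finset.mem_Ico.1 hi).2
      refine Finset.mem_sdiff.2 ⟨hwb i hi, ?_⟩
      simp only [hI, Finset.mem_Icc]; omega
    · intro t ht
      by_cases htI : t ∈ I
      · simp [htI]
      · simp only [Finset.mem_sdiff, htI, not_false_eq_true, and_true]
        exact hout t ht
  · rintro ⟨j, hj1, hja, hwa, hjb, hwb, hout⟩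
    obtain ⟨hja', hjaI⟩ := Finset.mem_sdiff.1 hja
    have hjle : j + N ≤ k - 1 := hla _ hja'
    have hjsmall : j + N < k - N := by
      simp only [hI, Finset.mem_Icc] at hjaI; omega
    refine ⟨j, hj1, hja', ?_, ?_, ?_, ?_⟩
    · intro i hi hmem
      have hilt : i < j + N := (Finset.mem_Ico.1 hi).2
      refine hwa i hi (Finset.mem_sdiff.2 ⟨hmem, ?_⟩)
      simp only [hI, Finset.mem_Icc]; omega
    · intro h
      refine hjb (Finset.mem_sdiff.2 ⟨h, ?_⟩)
      simp only [hI, Finset.mem_Icc]; omega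
    · intro i hi
      exact (Finset.mem_sdiff.1 (hwb i hi)).1
    · intro t ht
      by_cases htI : t ∈ I
      · simp [ha htI, hb htI]
      · have := hout t ht
        simp only [Finset.mem_sdiff, htI, not_false_eq_true, and_true] at this
        exact this

end AuxiliaryQF

/-- Proposition 4.4: for `k ≥ N+1` and `A_{k,1} < n ≤ A_{k,2}`:
(i) `a ↦ a - τ_k` is a bijection from `T_n = {a ∈ S_n : l(a) = k}` onto `S_{n-A_k}`
preserving the edge relation in both directions;
(ii) every `a ∈ R_n = {a ∈ S_n : l(a) = k-1}` satisfies `a_{k-N} = ⋯ = a_{k-1} = 1`, and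
`a ↦ a - η_k` is a bijection from `R_n` onto `{b ∈ S_{n-A_k} : l(b) ≤ k-N-1}` preserving
the edge relation in both directions. -/

theorem stmt_13 (N : ℕ) (hN : 2 ≤ N) (A : ℕ → ℕ) (hA : QuasiFib N A)
    (k n : ℕ) (hk : N + 1 ≤ k) (h1 : Ak1 N A k < n) (h2 : n ≤ Ak2 N A k) :
    (Set.BijOn (fun F => F.erase k) {F | F ∈ SRep A n ∧ len F = k} (SRep A (n - A k)) ∧
      (∀ a, a ∈ SRep A n → len a = k → ∀ b, b ∈ SRep A n → len b = k →
        (Edge N a b ↔ Edge N (a.erase k) (b.erase k)))) ∧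
    ((∀ a, a ∈ SRep A n → len a = k - 1 → Finset.Icc (k - N) (k - 1) ⊆ a) ∧
      Set.BijOn (fun F => F \ Finset.Icc (k - N) (k - 1))
        {F | F ∈ SRep A n ∧ len F = k - 1}
        {G | G ∈ SRep A (n - A k) ∧ len G ≤ k - N - 1} ∧
      (∀ a, a ∈ SRep A n → len a = k - 1 → ∀ b, b ∈ SRep A n → len b = k - 1 →
        (Edge N a b ↔
          Edge N (a \ Finset.Icc (k - N) (k - 1)) (b \ Finset.Icc (k - N) (k - 1))))) := by
  classical
  -- basic facts
  have hAk : A k = ∑ i ∈ Finset.Icc (k - N) (k - 1), A i := by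
    have h := hA.2.1 (k - N) (by omega)
    rw [show k - N + N = k by omega] at h
    exact h
  have hposAk : 0 < A k := hA.1 k (by omega)
  have hn1 : A k < n := lt_of_le_of_lt (Nat.le_add_right _ _) h1
  have hbound2 : Ak2 N A k < A k + A k := by
    unfold Ak2
    have hs : ∑ i ∈ (Finset.Ico 1 (k - N + 1)).filter (fun i => ¬ N ∣ i), A (k - N + 1 - i)
        ≤ ∑ j ∈ Finset.Icc 1 (k - N), A j := by
      apply qf_sum_A_sub_le
      intro i hi
      simp only [Finset.mem_filter, Finset.mem_Ico] at hi
      omega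
    have hP := qf_P_lt hN hA (k - N)
    have hmono := qf_mono hN hA (k - N + 2) k (by omega) (by omega)
    omega
  have hnAk : n - A k < A k := by omega
  have hsmall : ∀ G ∈ SRep A (n - A k), ∀ i ∈ G, i ≤ k - 1 := by
    rintro G ⟨hG1, hG2⟩ i hi
    by_contra h
    push_neg at h
    have h1' : A k ≤ A i := qf_mono hN hA k i (by omega) (by omega)
    have h2' : A i ≤ ∑ j ∈ G, A j :=
      Finset.single_le_sum (f := A) (fun j _ => Nat.zero_le _) hi
    omega
  have hmemk : ∀ F, F ∈ SRep A n → len F = k → k ∈ F := by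
    rintro F ⟨hF1, hF2⟩ hlen
    have hne : F.Nonempty := by
      rcases F.eq_empty_or_nonempty with rfl | h
      · simp at hF2; omega
      · exact h
    obtain ⟨b, hb, hsup⟩ := Finset.exists_mem_eq_sup F hne id
    have : k = b := by rw [← hlen]; exact hsup
    exact this ▸ hb
  have hmemle : ∀ (F : Finset ℕ) (i : ℕ), i ∈ F → i ≤ len F := by
    intro F i hi
    exact Finset.le_sup (f := id) hi
  -- part (ii) first key claim
  have hsubI : ∀ a, a ∈ SRep A n → len a = k - 1 → Finset.Icc (k - N) (k - 1) ⊆ a := by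
    rintro a ⟨ha1, ha2⟩ hlen
    intro j0 hj0
    by_contra hj0a
    have hj0' := Finset.mem_Icc.1 hj0
    have hale : ∀ i ∈ a, i ≤ k - 1 := fun i hi => hlen ▸ hmemle a i hi
    have hasub : a ⊆ (Finset.Icc 1 (k - 1)).erase j0 := by
      intro i hi
      refine Finset.mem_erase.2 ⟨fun h => hj0a (h ▸ hi), ?_⟩
      simp only [Finset.mem_Icc]
      exact ⟨ha1 i hi, hale i hi⟩
    have hsumle : n ≤ ∑ i ∈ (Finset.Icc 1 (k - 1)).erase j0, A i := by
      rw [← ha2]; exact Finset.sum_le_sum_of_subset hasub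
    have hjmem : j0 ∈ Finset.Icc 1 (k - 1) := by
      simp only [Finset.mem_Icc]; omega
    have herase := Finset.add_sum_erase _ A hjmem
    have hj0ge : A (k - N) ≤ A j0 := qf_mono hN hA _ _ (by omega) (by omega)
    have hP : ∑ i ∈ Finset.Icc 1 (k - 1), A i
        = A k + ∑ i ∈ Finset.Icc 1 (k - N - 1), A i := by
      have := qf_rec hN hA (r := k - 1) (by omega)
      rw [show k - 1 + 1 = k by omega, show k - 1 - N = k - N - 1 by omega] at this
      exact this
    have hrein : ∑ i ∈ Finset.Ico 1 (k - N), A (k - N - i)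
        = ∑ j ∈ Finset.Icc 1 (k - N - 1), A j := qf_reindex A
    have hsplit := Finset.sum_filter_add_sum_filter_not (Finset.Ico 1 (k - N))
      (fun i => N ∣ i) (fun i => A (k - N - i))
    have hdiv := qf_div_le hN hA (m := k - N) (by omega)
    have hAk1 : Ak1 N A k
        = A k + ∑ i ∈ (Finset.Ico 1 (k - N)).filter (fun i => ¬ N ∣ i), A (k - N - i) := rfl
    omega
  refine ⟨⟨⟨?_, ?_, ?_⟩, ?_⟩, hsubI, ⟨?_, ?_, ?_⟩, ?_⟩
  · -- (i) MapsTo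
    rintro F ⟨⟨hF1, hF2⟩, hlen⟩
    show F.erase k ∈ SRep A (n - A k)
    have hkF := hmemk F ⟨hF1, hF2⟩ hlen
    have hsum := Finset.add_sum_erase F A hkF
    exact ⟨fun i hi => hF1 i (Finset.mem_of_mem_erase hi), by omega⟩
  · -- (i) InjOn
    intro F1 hF1 F2 hF2 heq
    have h1k := hmemk F1 hF1.1 hF1.2
    have h2k := hmemk F2 hF2.1 hF2.2
    have heq' : F1.erase k = F2.erase k := heq
    rw [← Finset.insert_erase h1k, ← Finset.insert_erase h2k, heq']
  · -- (i) SurjOn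
    rintro G ⟨hG1, hG2⟩
    have hGle : ∀ i ∈ G, i ≤ k - 1 := hsmall G ⟨hG1, hG2⟩
    have hkG : k ∉ G := fun h => by have := hGle k h; omega
    refine ⟨insert k G, ⟨⟨?_, ?_⟩, ?_⟩, ?_⟩
    · intro i hi
      rcases Finset.mem_insert.1 hi with rfl | h
      · omega
      · exact hG1 i h
    · rw [Finset.sum_insert hkG, hG2]; omega
    · show (insert k G).sup id = k
      rw [Finset.sup_insert]
      have hsle : G.sup id ≤ k := Finset.sup_le fun i hi => by
        have := hGle i hi; simp only [id]; omega
      simpa using max_eq_left hsle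
    · simp only [Finset.erase_insert hkG]
  · -- (i) edges
    intro a ha hla b hb hlb
    exact qf_edge_erase (hmemk a ha hla) (hmemk b hb hlb)
  · -- (ii) MapsTo
    rintro F ⟨⟨hF1, hF2⟩, hlen⟩
    show F \ Finset.Icc (k - N) (k - 1) ∈
      {G | G ∈ SRep A (n - A k) ∧ len G ≤ k - N - 1}
    have hIF := hsubI F ⟨hF1, hF2⟩ hlen
    have hsd := Finset.sum_sdiff (f := A) hIF
    rw [← hAk] at hsd
    refine ⟨⟨fun i hi => hF1 i (Finset.mem_sdiff.1 hi).1, by omega⟩, ?_⟩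
    show (F \ Finset.Icc (k - N) (k - 1)).sup id ≤ k - N - 1
    apply Finset.sup_le
    intro i hi
    obtain ⟨hiF, hiI⟩ := Finset.mem_sdiff.1 hi
    have hile : i ≤ k - 1 := hlen ▸ hmemle F i hiF
    simp only [Finset.mem_Icc] at hiI
    have hi1 : 1 ≤ i := hF1 i hiF
    simp only [id]; omega
  · -- (ii) InjOn
    intro F1 hF1 F2 hF2 heq
    have h1I := hsubI F1 hF1.1 hF1.2
    have h2I := hsubI F2 hF2.1 hF2.2
    have heq' : F1 \ Finset.Icc (k - N) (k - 1) = F2 \ Finset.Icc (k - N) (k - 1) := heq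
    rw [← Finset.sdiff_union_of_subset h1I, ← Finset.sdiff_union_of_subset h2I, heq']
  · -- (ii) SurjOn
    rintro G ⟨⟨hG1, hG2⟩, hGlen⟩
    have hGle : ∀ i ∈ G, i ≤ k - N - 1 := fun i hi => le_trans (hmemle G i hi) hGlen
    have hdisj : Disjoint G (Finset.Icc (k - N) (k - 1)) := by
      rw [Finset.disjoint_left]
      intro i hi hiI
      simp only [Finset.mem_Icc] at hiI
      have := hGle i hi; omega
    refine ⟨G ∪ Finset.Icc (k - N) (k - 1), ⟨⟨?_, ?_⟩, ?_⟩, ?_⟩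
    · intro i hi
      rcases Finset.mem_union.1 hi with h | h
      · exact hG1 i h
      · simp only [Finset.mem_Icc] at h; omega
    · rw [Finset.sum_union hdisj, hG2, ← hAk]; omega
    · show (G ∪ Finset.Icc (k - N) (k - 1)).sup id = k - 1
      apply le_antisymm
      · apply Finset.sup_le
        intro i hi
        rcases Finset.mem_union.1 hi with h | h
        · have := hGle i h; simp only [id]; omega
        · simp only [Finset.mem_Icc] at h; simp only [id]; omega
      · apply Finset.le_sup (f := id) (b := k - 1)
        exact Finset.mem_union.2 (Or.inr (by simp only [Finset.mem_Icc]; omega))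
    · simp only [Finset.union_sdiff_right]
      exact Finset.sdiff_eq_self_of_disjoint hdisj
  · -- (ii) edges
    intro a ha hla b hb hlb
    exact qf_edge_sdiff hN hk (hsubI a ha hla) (hsubI b hb hlb)
      (fun i hi => hla ▸ hmemle a i hi)
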